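/- Let a, b ∈ ℝ_{++}ⁿ be strictly positive probability vectors, C ∈ ℝ₊^{n×n}, γ > 0, K := exp(−C/γ), and let (f*, g*) be any dual optimal solution (i.e. diag(e^{f*/γ}) K diag(e^{g*/γ}) has row sums a and column sums b). Then h(f*, g*) − h(γ log a, γ log b) ≤ 4‖C‖_∞. -/

import Mathlib

/-- The dual entropic OT objective
`h(f,g) = ⟨f,a⟩ + ⟨g,b⟩ − γ Σ_{i,j} exp((f_i + g_j − C_{ij})/γ)`. -/
noncomputable def dualObj {n : ℕ} (a b : Fin n → ℝ) (C : Matrix (Fin n) (Fin n) ℝ)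
    (γ : ℝ) (f g : Fin n → ℝ) : ℝ :=
  (∑ i, f i * a i) + (∑ j, g j * b j) -
    γ * ∑ i, ∑ j, Real.exp ((f i + g j - C i j) / γ)

/-- The transport plan `P = diag(e^{f/γ}) K diag(e^{g/γ})` with `K = exp(−C/γ)`. -/
noncomputable def plan {n : ℕ} (C : Matrix (Fin n) (Fin n) ℝ) (γ : ℝ)
    (f g : Fin n → ℝ) : Matrix (Fin n) (Fin n) ℝ :=
  fun i j => Real.exp (f i / γ) * Real.exp (-C i j / γ) * Real.exp (g j / γ)

/-- **Initial dual gap bound** (Lemma of the paper): for any dual optimal solution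
`(f*, g*)`, `h(f*,g*) − h(γ log a, γ log b) ≤ 4‖C‖_∞`. -/
theorem greenkhorn_initial_gap_bound {n : ℕ} (a b : Fin n → ℝ)
    (C : Matrix (Fin n) (Fin n) ℝ) (γ : ℝ) (hγ : 0 < γ)
    (ha0 : ∀ i, 0 < a i) (hb0 : ∀ j, 0 < b j)
    (ha1 : ∑ i, a i = 1) (hb1 : ∑ j, b j = 1)
    (hC : ∀ i j, 0 ≤ C i j)
    (fs gs : Fin n → ℝ)
    (hfs : ∀ i, ∑ j, plan C γ fs gs i j = a i)
    (hgs : ∀ j, ∑ i, plan C γ fs gs i j = b j) :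
    dualObj a b C γ fs gs -
        dualObj a b C γ (fun i => γ * Real.log (a i)) (fun j => γ * Real.log (b j)) ≤
      4 * ⨆ i, ⨆ j, |C i j| := by
  rcases Nat.eq_zero_or_pos n with hn | hn
  · subst hn; simp at ha1
  haveI : Nonempty (Fin n) := ⟨⟨0, hn⟩⟩
  have hγ' : γ ≠ 0 := ne_of_gt hγ
  set N := ⨆ i, ⨆ j, |C i j| with hNdef
  have hCN : ∀ i j, C i j ≤ N := by
    intro i j
    calc C i j ≤ |C i j| := le_abs_self _
    _ ≤ ⨆ j, |C i j| := le_ciSup (f := fun j => |C i j|) (Set.Finite.bddAbove (Set.finite_range _)) j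
    _ ≤ N := le_ciSup (f := fun i => ⨆ j, |C i j|) (Set.Finite.bddAbove (Set.finite_range _)) i
  have hN0 : 0 ≤ N := le_trans (hC ⟨0, hn⟩ ⟨0, hn⟩) (hCN ⟨0, hn⟩ ⟨0, hn⟩)
  -- plan entries as exponentials
  have hplan : ∀ i j, plan C γ fs gs i j = Real.exp ((fs i + gs j - C i j) / γ) := by
    intro i j
    rw [plan, ← Real.exp_add, ← Real.exp_add]
    congr 1
    field_simp
    ring
  -- total mass of the plan is 1
  have hsum1 : ∑ i, ∑ j, Real.exp ((fs i + gs j - C i j) / γ) = 1 := by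
    simp_rw [← hplan, hfs, ha1]
  -- value of dualObj at the optimum
  have hval : dualObj a b C γ fs gs =
      (∑ i, fs i * a i) + (∑ j, gs j * b j) - γ := by
    rw [dualObj, hsum1, mul_one]
  -- value of dualObj at (γ log a, γ log b)
  have hexp0 : ∀ i j, Real.exp ((γ * Real.log (a i) + γ * Real.log (b j) - C i j) / γ)
      = a i * b j * Real.exp (-C i j / γ) := by
    intro i j
    rw [show (γ * Real.log (a i) + γ * Real.log (b j) - C i j) / γ
        = Real.log (a i) + Real.log (b j) + (-C i j / γ) by field_simp; ring,
      Real.exp_add, Real.exp_add, Real.exp_log (ha0 i), Real.exp_log (hb0 j)]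
  have hval0 : dualObj a b C γ (fun i => γ * Real.log (a i)) (fun j => γ * Real.log (b j)) =
      (∑ i, γ * Real.log (a i) * a i) + (∑ j, γ * Real.log (b j) * b j) -
        γ * ∑ i, ∑ j, a i * b j * Real.exp (-C i j / γ) := by
    rw [dualObj]
    simp_rw [hexp0]
  -- the double sum in hval0 is at most 1
  have hS1 : ∑ i, ∑ j, a i * b j * Real.exp (-C i j / γ) ≤ 1 := by
    have : ∑ i, ∑ j, a i * b j * Real.exp (-C i j / γ) ≤ ∑ i, ∑ j, a i * b j := by
      apply Finset.sum_le_sum; intro i _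
      apply Finset.sum_le_sum; intro j _
      have hle1 : Real.exp (-C i j / γ) ≤ 1 := by
        rw [Real.exp_le_one_iff]
        apply div_nonpos_of_nonpos_of_nonneg (by linarith [hC i j]) hγ.le
      exact mul_le_of_le_one_right (mul_nonneg (ha0 i).le (hb0 j).le) hle1
    calc ∑ i, ∑ j, a i * b j * Real.exp (-C i j / γ) ≤ ∑ i, ∑ j, a i * b j := this
    _ = (∑ i, a i) * (∑ j, b j) := by rw [Finset.sum_mul_sum]
    _ = 1 := by rw [ha1, hb1, mul_one]
  -- partition sums
  set Sf := ∑ i, Real.exp (fs i / γ) with hSf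
  set Sg := ∑ j, Real.exp (gs j / γ) with hSg
  have hSfpos : 0 < Sf := Finset.sum_pos (fun _ _ => Real.exp_pos _) Finset.univ_nonempty
  have hSgpos : 0 < Sg := Finset.sum_pos (fun _ _ => Real.exp_pos _) Finset.univ_nonempty
  -- Sf * Sg ≥ 1
  have hSfSg : 1 ≤ Sf * Sg := by
    rw [Finset.sum_mul_sum]
    calc (1 : ℝ) = ∑ i, ∑ j, plan C γ fs gs i j := by simp_rw [hfs]; rw [ha1]
    _ ≤ ∑ i, ∑ j, Real.exp (fs i / γ) * Real.exp (gs j / γ) := by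
        apply Finset.sum_le_sum; intro i _
        apply Finset.sum_le_sum; intro j _
        rw [plan]
        have hle1 : Real.exp (-C i j / γ) ≤ 1 := by
          rw [Real.exp_le_one_iff]
          apply div_nonpos_of_nonpos_of_nonneg (by linarith [hC i j]) hγ.le
        calc Real.exp (fs i / γ) * Real.exp (-C i j / γ) * Real.exp (gs j / γ)
            = (Real.exp (fs i / γ) * Real.exp (gs j / γ)) * Real.exp (-C i j / γ) := by ring
        _ ≤ Real.exp (fs i / γ) * Real.exp (gs j / γ) :=
            mul_le_of_le_one_right (by positivity) hle1
  have hlogSum : 0 ≤ Real.log Sf + Real.log Sg := by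
    have := Real.log_nonneg hSfSg
    rwa [Real.log_mul (ne_of_gt hSfpos) (ne_of_gt hSgpos)] at this
  -- bound on fs
  have hfbound : ∀ i, fs i ≤ γ * Real.log (a i) + N - γ * Real.log Sg := by
    intro i
    set T := ∑ j, Real.exp (-C i j / γ) * Real.exp (gs j / γ) with hT
    have hTpos : 0 < T :=
      Finset.sum_pos (fun _ _ => mul_pos (Real.exp_pos _) (Real.exp_pos _))
        Finset.univ_nonempty
    have hrow : Real.exp (fs i / γ) * T = a i := by
      rw [← hfs i, hT, Finset.mul_sum]
      apply Finset.sum_congr rfl; intro j _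
      rw [plan]; ring
    have hTlb : Real.exp (-N / γ) * Sg ≤ T := by
      rw [hSg, Finset.mul_sum]
      apply Finset.sum_le_sum; intro j _
      have : Real.exp (-N / γ) ≤ Real.exp (-C i j / γ) := by
        exact Real.exp_le_exp.mpr ((div_le_div_iff_of_pos_right hγ).mpr (by linarith [hCN i j]))
      exact mul_le_mul_of_nonneg_right this (Real.exp_pos _).le
    have hfsv : fs i = γ * (Real.log (a i) - Real.log T) := by
      have : Real.exp (fs i / γ) = a i / T := by
        field_simp at hrow ⊢; linarith [hrow]
      have hlog := congrArg Real.log this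
      rw [Real.log_exp, Real.log_div (ne_of_gt (ha0 i)) (ne_of_gt hTpos)] at hlog
      field_simp at hlog ⊢; linarith
    have hlogT : -N / γ + Real.log Sg ≤ Real.log T := by
      have := Real.log_le_log (mul_pos (Real.exp_pos _) hSgpos) hTlb
      rwa [Real.log_mul (ne_of_gt (Real.exp_pos _)) (ne_of_gt hSgpos), Real.log_exp] at this
    rw [hfsv]
    rw [neg_div] at hlogT
    have : Real.log (a i) - Real.log T ≤ Real.log (a i) + N / γ - Real.log Sg := by
      linarith [hlogT]
    calc γ * (Real.log (a i) - Real.log T)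
        ≤ γ * (Real.log (a i) + N / γ - Real.log Sg) :=
          mul_le_mul_of_nonneg_left this hγ.le
    _ = γ * Real.log (a i) + N - γ * Real.log Sg := by field_simp
  -- bound on gs
  have hgbound : ∀ j, gs j ≤ γ * Real.log (b j) + N - γ * Real.log Sf := by
    intro j
    set T := ∑ i, Real.exp (-C i j / γ) * Real.exp (fs i / γ) with hT
    have hTpos : 0 < T :=
      Finset.sum_pos (fun _ _ => mul_pos (Real.exp_pos _) (Real.exp_pos _))
        Finset.univ_nonempty
    have hrow : Real.exp (gs j / γ) * T = b j := by
      rw [← hgs j, hT, Finset.mul_sum]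
      apply Finset.sum_congr rfl; intro i _
      rw [plan]; ring
    have hTlb : Real.exp (-N / γ) * Sf ≤ T := by
      rw [hSf, Finset.mul_sum]
      apply Finset.sum_le_sum; intro i _
      have : Real.exp (-N / γ) ≤ Real.exp (-C i j / γ) :=
        Real.exp_le_exp.mpr ((div_le_div_iff_of_pos_right hγ).mpr (by linarith [hCN i j]))
      exact mul_le_mul_of_nonneg_right this (Real.exp_pos _).le
    have hfsv : gs j = γ * (Real.log (b j) - Real.log T) := by
      have : Real.exp (gs j / γ) = b j / T := by
        field_simp at hrow ⊢; linarith [hrow]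
      have hlog := congrArg Real.log this
      rw [Real.log_exp, Real.log_div (ne_of_gt (hb0 j)) (ne_of_gt hTpos)] at hlog
      field_simp at hlog ⊢; linarith
    have hlogT : -N / γ + Real.log Sf ≤ Real.log T := by
      have := Real.log_le_log (mul_pos (Real.exp_pos _) hSfpos) hTlb
      rwa [Real.log_mul (ne_of_gt (Real.exp_pos _)) (ne_of_gt hSfpos), Real.log_exp] at this
    rw [hfsv]
    rw [neg_div] at hlogT
    have : Real.log (b j) - Real.log T ≤ Real.log (b j) + N / γ - Real.log Sf := by
      linarith [hlogT]
    calc γ * (Real.log (b j) - Real.log T)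
        ≤ γ * (Real.log (b j) + N / γ - Real.log Sf) :=
          mul_le_mul_of_nonneg_left this hγ.le
    _ = γ * Real.log (b j) + N - γ * Real.log Sf := by field_simp
  -- sum bounds
  have hA : ∑ i, fs i * a i ≤ (∑ i, γ * Real.log (a i) * a i) + N - γ * Real.log Sg := by
    calc ∑ i, fs i * a i
        ≤ ∑ i, (γ * Real.log (a i) + N - γ * Real.log Sg) * a i := by
          apply Finset.sum_le_sum; intro i _
          exact mul_le_mul_of_nonneg_right (hfbound i) (ha0 i).le
    _ = (∑ i, γ * Real.log (a i) * a i) + (N - γ * Real.log Sg) * ∑ i, a i := by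
          simp_rw [add_sub_assoc, add_mul, Finset.sum_add_distrib, Finset.mul_sum]
    _ = (∑ i, γ * Real.log (a i) * a i) + N - γ * Real.log Sg := by
          rw [ha1, mul_one]; ring
  have hB : ∑ j, gs j * b j ≤ (∑ j, γ * Real.log (b j) * b j) + N - γ * Real.log Sf := by
    calc ∑ j, gs j * b j
        ≤ ∑ j, (γ * Real.log (b j) + N - γ * Real.log Sf) * b j := by
          apply Finset.sum_le_sum; intro j _
          exact mul_le_mul_of_nonneg_right (hgbound j) (hb0 j).le
    _ = (∑ j, γ * Real.log (b j) * b j) + (N - γ * Real.log Sf) * ∑ j, b j := by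
          simp_rw [add_sub_assoc, add_mul, Finset.sum_add_distrib, Finset.mul_sum]
    _ = (∑ j, γ * Real.log (b j) * b j) + N - γ * Real.log Sf := by
          rw [hb1, mul_one]; ring
  -- conclude
  have hγlog : 0 ≤ γ * (Real.log Sf + Real.log Sg) := mul_nonneg hγ.le hlogSum
  have hγS : γ * (∑ i, ∑ j, a i * b j * Real.exp (-C i j / γ)) ≤ γ :=
    calc γ * (∑ i, ∑ j, a i * b j * Real.exp (-C i j / γ)) ≤ γ * 1 :=
          mul_le_mul_of_nonneg_left hS1 hγ.le
    _ = γ := mul_one γ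
  rw [hval, hval0]
  have := hγlog
  rw [mul_add] at this
  linarith
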